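/- arXiv:2405.14898 — 5 statements merged into one kernel-verified Lean document; each statement's English description precedes it below -/
import Mathlib

section
/- Let d ≥ 2 and n ≥ 2d+1. Then the minimum bisection width (rna number) of the d-th power of the cycle C_n satisfies σ⁻¹(C_n^d) ≤ d(d+1). -/
/-- A coloring `f : V → Fin 2` is balanced if its two color class sizes differ by at most 1. -/
def BalancedColoring {V : Type*} (f : V → Fin 2) : Prop :=
  (Nat.card {v | f v = 0} : ℤ) - (Nat.card {v | f v = 1} : ℤ) ≤ 1 ∧
  (Nat.card {v | f v = 1} : ℤ) - (Nat.card {v | f v = 0} : ℤ) ≤ 1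

/-- The set `g(f)` of bichromatic edges of `G` under the coloring `f`. -/
def bichromatic {V : Type*} (G : SimpleGraph V) (f : V → Fin 2) : Set (Sym2 V) :=
  {e | e ∈ G.edgeSet ∧ Sym2.lift ⟨fun a b => f a ≠ f b, fun a b => by simp [ne_comm]⟩ e}

/-- `|g(f)|`, the number of bichromatic edges. -/
noncomputable def mixedCount {V : Type*} (G : SimpleGraph V) (f : V → Fin 2) : ℕ :=
  (bichromatic G f).ncard

/-- The rna number / minimum bisection width `σ⁻¹(G)`. -/
noncomputable def rna {V : Type*} (G : SimpleGraph V) : ℕ :=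
  sInf {k | ∃ f : V → Fin 2, BalancedColoring f ∧ mixedCount G f = k}

/-- The `d`-th power of the cycle `C_n`, with vertex set `ZMod n`. -/
def cyclePow (n d : ℕ) : SimpleGraph (ZMod n) where
  Adj u v := u ≠ v ∧ ∃ j : ℕ, 1 ≤ j ∧ j ≤ d ∧ (v = u + (j : ZMod n) ∨ u = v + (j : ZMod n))
  symm := by
    constructor
    rintro u v ⟨h, j, h1, h2, h3⟩
    exact ⟨h.symm, j, h1, h2, h3.symm⟩
  loopless := by constructor; rintro u ⟨h, -⟩; exact h rfl

theorem stmt2 (d n : ℕ) (hd : 2 ≤ d) (hn : 2 * d + 1 ≤ n) :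
    rna (cyclePow n d) ≤ d * (d + 1) := by
  classical
  haveI : NeZero n := ⟨by omega⟩
  set m : ℕ := n / 2 with hmdef
  have hdm : d ≤ m := by omega
  have hmdn : m + d ≤ n := by omega
  have hmn : m ≤ n := by omega
  set f : ZMod n → Fin 2 := fun v => if v.val < m then 0 else 1 with hf
  -- cardinality of the 0-class
  have hcard0 : (Finset.univ.filter (fun v : ZMod n => v.val < m)).card = m := by
    have : (Finset.univ.filter (fun v : ZMod n => v.val < m)).card = (Finset.range m).card := by
      refine Finset.card_nbij' (fun v => v.val) (fun k => (k : ZMod n)) ?_ ?_ ?_ ?_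
      · intro v hv; simp only [Finset.mem_coe, Finset.mem_filter] at hv; simpa using hv.2
      · intro k hk; simp only [Finset.mem_coe, Finset.mem_range] at hk
        simp [ZMod.val_cast_of_lt (lt_of_lt_of_le hk hmn), hk]
      · intro v _; exact ZMod.natCast_rightInverse v
      · intro k hk; simp only [Finset.mem_coe, Finset.mem_range] at hk
        exact ZMod.val_cast_of_lt (lt_of_lt_of_le hk hmn)
    simpa using this
  have hcard1 : (Finset.univ.filter (fun v : ZMod n => ¬ v.val < m)).card = n - m := by
    have htot := Finset.card_filter_add_card_filter_not
      (s := (Finset.univ : Finset (ZMod n))) (p := fun v : ZMod n => v.val < m)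
    have hu : (Finset.univ : Finset (ZMod n)).card = n := by
      simp [ZMod.card]
    omega
  have hset0 : {v : ZMod n | f v = 0} = ↑(Finset.univ.filter (fun v : ZMod n => v.val < m)) := by
    ext v
    simp only [hf, Set.mem_setOf_eq, Finset.coe_filter, Finset.mem_univ, true_and,
      Set.mem_setOf_eq]
    by_cases h : v.val < m <;> simp [h]
  have hset1 : {v : ZMod n | f v = 1} = ↑(Finset.univ.filter (fun v : ZMod n => ¬ v.val < m)) := by
    ext v
    simp only [hf, Set.mem_setOf_eq, Finset.coe_filter, Finset.mem_univ, true_and,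
      Set.mem_setOf_eq]
    by_cases h : v.val < m <;> simp [h]
  have hnc0 : Nat.card {v : ZMod n | f v = 0} = m := by
    rw [Nat.card_coe_set_eq, hset0, Set.ncard_coe_finset, hcard0]
  have hnc1 : Nat.card {v : ZMod n | f v = 1} = n - m := by
    rw [Nat.card_coe_set_eq, hset1, Set.ncard_coe_finset, hcard1]
  have hbal : BalancedColoring f := by
    constructor <;> rw [hnc0, hnc1] <;> omega
  -- the covering finset
  set S : Finset ((Σ _ : ℕ, ℕ) × Fin 2) :=
    ((Finset.range (d+1)).sigma fun j => Finset.range j) ×ˢ Finset.univ with hS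
  set F : ((Σ _ : ℕ, ℕ) × Fin 2) → Sym2 (ZMod n) := fun p =>
    if p.2 = 0 then s(((m - p.1.1 + p.1.2 : ℕ) : ZMod n), ((m + p.1.2 : ℕ) : ZMod n))
    else s(((n - p.1.1 + p.1.2 : ℕ) : ZMod n), ((p.1.2 : ℕ) : ZMod n)) with hF
  -- key: every bichromatic edge of the oriented form is in the image
  have key : ∀ (u : ZMod n) (j : ℕ), 1 ≤ j → j ≤ d → f u ≠ f (u + (j : ZMod n)) →
      ∃ x ∈ S, F x = s(u, u + (j : ZMod n)) := by
    intro u j hj1 hjd hb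
    set v : ZMod n := u + (j : ZMod n) with hv
    have ha : u.val < n := ZMod.val_lt u
    have hjval : ((j : ZMod n)).val = j := ZMod.val_cast_of_lt (by omega)
    have hvval : v.val = (u.val + j) % n := by
      rw [hv, ZMod.val_add, hjval]
    by_cases hw : u.val + j < n
    · -- no wraparound
      have hvv : v.val = u.val + j := by rw [hvval, Nat.mod_eq_of_lt hw]
      have hcross : u.val < m ∧ m ≤ u.val + j := by
        by_contra hc
        apply hb
        simp only [hf, hvv]
        by_cases h1 : u.val < m
        · have h2 : u.val + j < m := by omega
          simp [h1, h2]
        · have h2 : ¬ (u.val + j < m) := by omega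
          simp [h1, h2]
      obtain ⟨h1, h2⟩ := hcross
      refine ⟨⟨⟨j, u.val + j - m⟩, 0⟩, ?_, ?_⟩
      · simp only [hS, Finset.mem_product, Finset.mem_sigma, Finset.mem_range, Finset.mem_univ,
          and_true]
        omega
      · simp only [hF, if_pos rfl]
        have e1 : m - j + (u.val + j - m) = u.val := by omega
        have e2 : m + (u.val + j - m) = u.val + j := by omega
        have g1 : ((u.val : ℕ) : ZMod n) = u := ZMod.natCast_rightInverse u
        have g2 : ((u.val + j : ℕ) : ZMod n) = v := by
          rw [hv]; push_cast; rw [g1]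
        rw [e1, e2, g1, g2]
    · -- wraparound
      have hw2 : u.val + j < 2 * n := by omega
      have hvv : v.val = u.val + j - n := by
        rw [hvval]
        have : (u.val + j) % n = (u.val + j - n) % n := by
          conv_lhs => rw [Nat.mod_eq_sub_mod (by omega)]
        rw [this, Nat.mod_eq_of_lt (by omega)]
      refine ⟨⟨⟨j, u.val + j - n⟩, 1⟩, ?_, ?_⟩
      · simp only [hS, Finset.mem_product, Finset.mem_sigma, Finset.mem_range, Finset.mem_univ,
          and_true]
        omega
      · simp only [hF, if_neg (by decide : (1 : Fin 2) ≠ 0)]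
        have e1 : n - j + (u.val + j - n) = u.val := by omega
        have g1 : ((u.val : ℕ) : ZMod n) = u := ZMod.natCast_rightInverse u
        have g2 : ((u.val + j - n : ℕ) : ZMod n) = v := by
          rw [← hvv]; exact ZMod.natCast_rightInverse v
        rw [e1, g1, g2]
  have hsub : bichromatic (cyclePow n d) f ⊆ ↑(S.image F) := by
    intro e he
    induction e using Sym2.ind with
    | _ u v =>
      obtain ⟨he, hb⟩ := he
      rw [SimpleGraph.mem_edgeSet] at he
      simp only [Sym2.lift_mk] at hb
      obtain ⟨hne, j, hj1, hjd, hc | hc⟩ := he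
      · subst hc
        obtain ⟨x, hx, hFx⟩ := key u j hj1 hjd hb
        simp only [Finset.coe_image, Set.mem_image, Finset.mem_coe]
        exact ⟨x, hx, hFx⟩
      · subst hc
        obtain ⟨x, hx, hFx⟩ := key v j hj1 hjd (Ne.symm hb)
        simp only [Finset.coe_image, Set.mem_image, Finset.mem_coe]
        exact ⟨x, hx, by rw [hFx, Sym2.eq_swap]⟩
  have hmix : mixedCount (cyclePow n d) f ≤ d * (d + 1) := by
    have h1 : mixedCount (cyclePow n d) f ≤ (S.image F).card := by
      rw [mixedCount, ← Set.ncard_coe_finset]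
      exact Set.ncard_le_ncard hsub (Finset.finite_toSet _)
    have h2 : (S.image F).card ≤ S.card := Finset.card_image_le
    have h3 : S.card = d * (d + 1) := by
      rw [hS, Finset.card_product, Finset.card_sigma]
      simp only [Finset.card_range, Finset.card_univ, Fintype.card_fin]
      rw [Finset.sum_range_id_mul_two, Nat.add_sub_cancel, Nat.mul_comm]
    exact le_trans h1 (le_trans h2 (le_of_eq h3))
  calc rna (cyclePow n d) ≤ mixedCount (cyclePow n d) f :=
        Nat.sInf_le ⟨f, hbal, rfl⟩
    _ ≤ d * (d + 1) := hmix
end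

section
/- Let d ≥ 2 and n > 2d+1. Deleting a vertex v_0 from C_n^d and adding the edges (v_i, v_{i+d+1 mod n}) for i ∈ {n−d, …, n−1} yields a graph isomorphic to C_{n−1}^d. -/
/-- The extra edge set `S = {(v_i, v_{i+d+1}) : n-d ≤ i ≤ n-1}`. -/
def Sset (n d : ℕ) : Set (Sym2 (ZMod n)) :=
  {e | ∃ i : ℕ, n - d ≤ i ∧ i ≤ n - 1 ∧ e = s((i : ZMod n), (i : ZMod n) + (d + 1))}

/-- The graph `H = C_n^d - v_0 + S`. -/
def Hgraph (n d : ℕ) : SimpleGraph {v : ZMod n // v ≠ 0} :=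
  SimpleGraph.comap Subtype.val ((cyclePow n d) ⊔ SimpleGraph.fromEdgeSet (Sset n d))

lemma zmod_eq_iff_val {n : ℕ} [NeZero n] (u v : ZMod n) {j : ℕ} (hj : j < n) :
    v = u + (j : ZMod n) ↔ (v - u).val = j := by
  constructor
  · rintro rfl; simp [ZMod.val_cast_of_lt hj]
  · intro h
    have : ((v - u).val : ZMod n) = (j : ZMod n) := by rw [h]
    rw [ZMod.natCast_val, ZMod.cast_id] at this
    rw [← this]; ring

lemma cyclePow_adj {m d : ℕ} [NeZero m] (hdm : d < m) (u v : ZMod m) :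
    (cyclePow m d).Adj u v ↔
      ((1 ≤ (v - u).val ∧ (v - u).val ≤ d) ∨ (m - d ≤ (v - u).val ∧ (v - u).val ≤ m - 1)) := by
  constructor
  · rintro ⟨hne, j, h1, h2, h3⟩
    have hjm : j < m := lt_of_le_of_lt h2 hdm
    rcases h3 with h3 | h3
    · left; rw [(zmod_eq_iff_val u v hjm).mp h3]; exact ⟨h1, h2⟩
    · right
      have hval : (u - v).val = j := (zmod_eq_iff_val v u hjm).mp h3
      have hvu : v - u ≠ 0 := sub_ne_zero.mpr (Ne.symm hne)
      have : (v - u).val = m - j := by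
        have := ZMod.neg_val (u - v)
        have huv : u - v ≠ 0 := sub_ne_zero.mpr hne
        rw [if_neg huv, hval] at this
        rw [show v - u = -(u - v) by ring, this]
      rw [this]
      omega
  · intro h
    have hδm : (v - u).val < m := ZMod.val_lt _
    have hδ1 : 1 ≤ (v - u).val := by rcases h with ⟨h1, _⟩ | ⟨h1, _⟩ <;> omega
    have hne : v - u ≠ 0 := by
      intro h0; rw [h0, ZMod.val_zero] at hδ1; omega
    have hne' : u ≠ v := fun h' => hne (by rw [h']; ring)
    rcases h with ⟨h1, h2⟩ | ⟨h1, h2⟩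
    · exact ⟨hne', (v - u).val, h1, h2, Or.inl
        ((zmod_eq_iff_val u v hδm).mpr rfl)⟩
    · refine ⟨hne', m - (v - u).val, by omega, by omega, Or.inr ?_⟩
      rw [zmod_eq_iff_val v u (by omega)]
      have := ZMod.neg_val (v - u)
      rw [if_neg hne] at this
      rw [show u - v = -(v - u) by ring, this]

lemma sset_mem {n d : ℕ} [NeZero n] (hdn : d + 1 < n) (u v : ZMod n) :
    s(u, v) ∈ Sset n d ↔
      ((n - d ≤ u.val ∧ (v - u).val = d + 1) ∨ (n - d ≤ v.val ∧ (u - v).val = d + 1)) := by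
  have hcast : ((d : ZMod n) + 1) = ((d + 1 : ℕ) : ZMod n) := by push_cast; ring
  constructor
  · rintro ⟨i, hi1, hi2, heq⟩
    have hin : i < n := by omega
    have hval : (i : ZMod n).val = i := ZMod.val_cast_of_lt hin
    rw [Sym2.eq_iff] at heq
    rcases heq with ⟨hu, hv⟩ | ⟨hu, hv⟩
    · left
      refine ⟨by rw [hu, hval]; exact hi1, ?_⟩
      subst hu; subst hv
      rw [hcast]
      exact (zmod_eq_iff_val _ _ hdn).mp rfl
    · right
      refine ⟨by rw [hv, hval]; exact hi1, ?_⟩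
      subst hv; subst hu
      rw [hcast]
      exact (zmod_eq_iff_val _ _ hdn).mp rfl
  · rintro (⟨h1, h2⟩ | ⟨h1, h2⟩)
    · refine ⟨u.val, h1, by have := ZMod.val_lt u; omega, ?_⟩
      rw [Sym2.eq_iff]
      left
      constructor
      · rw [ZMod.natCast_val, ZMod.cast_id]
      · rw [ZMod.natCast_val, ZMod.cast_id, hcast]
        exact (zmod_eq_iff_val u v hdn).mpr h2
    · refine ⟨v.val, h1, by have := ZMod.val_lt v; omega, ?_⟩
      rw [Sym2.eq_iff]
      right
      constructor
      · rw [ZMod.natCast_val, ZMod.cast_id, hcast]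
        exact (zmod_eq_iff_val v u hdn).mpr h2
      · rw [ZMod.natCast_val, ZMod.cast_id]

lemma val_sub' {n : ℕ} [NeZero n] (u v : ZMod n) :
    (v - u).val = (v.val + (n - u.val)) % n := by
  have hu : u.val ≤ n := le_of_lt (ZMod.val_lt u)
  have h : ((v.val + (n - u.val) : ℕ) : ZMod n) = v - u := by
    push_cast [Nat.cast_sub hu]
    rw [ZMod.natCast_val, ZMod.natCast_val, ZMod.cast_id, ZMod.cast_id, ZMod.natCast_self]
    ring
  rw [← h, ZMod.val_natCast]

def fwdEquiv (n : ℕ) (hn : 3 ≤ n) : {v : ZMod n // v ≠ 0} ≃ ZMod (n - 1) :=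
  haveI : NeZero n := ⟨by omega⟩
  haveI : NeZero (n - 1) := ⟨by omega⟩
  { toFun := fun v => ((v.1.val - 1 : ℕ) : ZMod (n - 1))
    invFun := fun w => ⟨((w.val + 1 : ℕ) : ZMod n), by
      have hw : w.val < n - 1 := ZMod.val_lt w
      have : ((w.val + 1 : ℕ) : ZMod n).val = w.val + 1 := ZMod.val_cast_of_lt (by omega)
      intro h0
      rw [h0, ZMod.val_zero] at this
      omega⟩
    left_inv := fun v => by
      have h1 : 1 ≤ v.1.val := by
        have := v.2
        rcases Nat.eq_zero_or_pos v.1.val with h | h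
        · exact absurd (ZMod.val_eq_zero v.1 |>.mp h) this
        · exact h
      have h2 : v.1.val < n := ZMod.val_lt v.1
      have hval : ((v.1.val - 1 : ℕ) : ZMod (n - 1)).val = v.1.val - 1 :=
        ZMod.val_cast_of_lt (by omega)
      apply Subtype.ext
      simp only [hval]
      rw [show v.1.val - 1 + 1 = v.1.val by omega, ZMod.natCast_val, ZMod.cast_id]
    right_inv := fun w => by
      have hw : w.val < n - 1 := ZMod.val_lt w
      have hval : ((w.val + 1 : ℕ) : ZMod n).val = w.val + 1 := ZMod.val_cast_of_lt (by omega)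
      simp only [hval]
      rw [show w.val + 1 - 1 = w.val by omega, ZMod.natCast_val, ZMod.cast_id] }


theorem stmt6 (d n : ℕ) (hd : 2 ≤ d) (hn : 2 * d + 1 < n) :
    Nonempty (Hgraph n d ≃g cyclePow (n - 1) d) := by
  haveI : NeZero n := ⟨by omega⟩
  haveI : NeZero (n - 1) := ⟨by omega⟩
  refine ⟨⟨fwdEquiv n (by omega), ?_⟩⟩
  intro u v
  have hfu : (fwdEquiv n (by omega : 3 ≤ n)) u = ((u.1.val - 1 : ℕ) : ZMod (n - 1)) := rfl
  have hfv : (fwdEquiv n (by omega : 3 ≤ n)) v = ((v.1.val - 1 : ℕ) : ZMod (n - 1)) := rfl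
  set a := u.1.val with ha
  set b := v.1.val with hb
  have ha1 : 1 ≤ a := by
    rcases Nat.eq_zero_or_pos a with h | h
    · exact absurd (ZMod.val_eq_zero u.1 |>.mp h) u.2
    · exact h
  have ha2 : a < n := ZMod.val_lt u.1
  have hb1 : 1 ≤ b := by
    rcases Nat.eq_zero_or_pos b with h | h
    · exact absurd (ZMod.val_eq_zero v.1 |>.mp h) v.2
    · exact h
  have hb2 : b < n := ZMod.val_lt v.1
  have heu : ((a - 1 : ℕ) : ZMod (n - 1)).val = a - 1 := ZMod.val_cast_of_lt (by omega)
  have hev : ((b - 1 : ℕ) : ZMod (n - 1)).val = b - 1 := ZMod.val_cast_of_lt (by omega)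
  have hδ : (v.1 - u.1).val = (b + (n - a)) % n := val_sub' u.1 v.1
  have hε : (u.1 - v.1).val = (a + (n - b)) % n := val_sub' v.1 u.1
  have hδ' : (((b - 1 : ℕ) : ZMod (n - 1)) - ((a - 1 : ℕ) : ZMod (n - 1))).val
      = ((b - 1) + ((n - 1) - (a - 1))) % (n - 1) := by
    rw [val_sub' _ _, heu, hev]
  have hne_iff : u.1 = v.1 ↔ a = b :=
    ⟨fun h => by rw [ha, hb, h], fun h => ZMod.val_injective n h⟩
  rw [hfu, hfv, cyclePow_adj (show d < n - 1 by omega)]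
  show _ ↔ (Hgraph n d).Adj u v
  simp only [Hgraph, SimpleGraph.comap_adj, SimpleGraph.sup_adj, SimpleGraph.fromEdgeSet_adj,
    cyclePow_adj (show d < n by omega), sset_mem (show d + 1 < n by omega)]
  rw [hδ', hδ, hε, ne_eq, hne_iff]
  rcases lt_trichotomy a b with hab | hab | hab
  · have e1 : (b + (n - a)) % n = b - a := by
      rw [show b + (n - a) = (b - a) + n by omega, Nat.add_mod_right]
      exact Nat.mod_eq_of_lt (by omega)
    have e2 : (a + (n - b)) % n = n - (b - a) := by rw [Nat.mod_eq_of_lt (by omega)]; omega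
    have e3 : ((b - 1) + ((n - 1) - (a - 1))) % (n - 1) = b - a := by
      rw [show (b - 1) + ((n - 1) - (a - 1)) = (b - a) + (n - 1) by omega, Nat.add_mod_right]
      exact Nat.mod_eq_of_lt (by omega)
    rw [e1, e2, e3]
    omega
  · have e1 : (b + (n - a)) % n = 0 := by
      rw [show b + (n - a) = n by omega, Nat.mod_self]
    have e2 : (a + (n - b)) % n = 0 := by
      rw [show a + (n - b) = n by omega, Nat.mod_self]
    have e3 : ((b - 1) + ((n - 1) - (a - 1))) % (n - 1) = 0 := by
      rw [show (b - 1) + ((n - 1) - (a - 1)) = n - 1 by omega, Nat.mod_self]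
    rw [e1, e2, e3]
    omega
  · have e1 : (b + (n - a)) % n = n - (a - b) := by rw [Nat.mod_eq_of_lt (by omega)]; omega
    have e2 : (a + (n - b)) % n = a - b := by
      rw [show a + (n - b) = (a - b) + n by omega, Nat.add_mod_right]
      exact Nat.mod_eq_of_lt (by omega)
    have e3 : ((b - 1) + ((n - 1) - (a - 1))) % (n - 1) = (n - 1) - (a - b) := by
      rw [Nat.mod_eq_of_lt (by omega)]; omega
    rw [e1, e2, e3]
    omega
end

section
/- Let d ≥ 2 and n > 2d+1, and let f be a balanced coloring of G = C_n^d with |f⁻¹(1)| ≥ |f⁻¹(2)| and f(v_0) = 1. Let H be the graph obtained from G by deleting v_0 and adding the edge set S = {(v_i, v_{i+d+1 mod n}) : n−d ≤ i ≤ n−1}, and let f' be the restriction of f to V(H). Then f' is a balanced coloring of H and |g(f')| ≤ |g(f)|. -/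
namespace Stmt7Aux

open Classical in
noncomputable def pick {n : ℕ} (f : ZMod n → Fin 2) (e : Sym2 (ZMod n)) : ZMod n :=
  if h : ∃ x ∈ e, f x = 1 then h.choose else 0

lemma pick_spec {n : ℕ} (f : ZMod n → Fin 2) (e : Sym2 (ZMod n))
    (h : ∃ x ∈ e, f x = 1) : pick f e ∈ e ∧ f (pick f e) = 1 := by
  unfold pick
  split
  · next h' => exact ⟨h'.choose_spec.1, h'.choose_spec.2⟩
  · next h' => exact absurd h h'

lemma fin2 (x y : Fin 2) (h : x ≠ y) : x = 1 ∨ y = 1 := by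
  fin_cases x <;> fin_cases y <;> simp_all

lemma mod_helper (x n : ℕ) (h : x < 2*n) :
    (x < n ∧ x % n = x) ∨ (n ≤ x ∧ x % n = x - n) := by
  rcases lt_or_ge x n with h' | h'
  · exact Or.inl ⟨h', Nat.mod_eq_of_lt h'⟩
  · refine Or.inr ⟨h', ?_⟩
    rw [Nat.mod_eq_sub_mod h', Nat.mod_eq_of_lt (by omega)]

lemma sset_val {n d : ℕ} (hd : 2 ≤ d) (hn : 2*d+1 < n) {e : Sym2 (ZMod n)}
    (he : e ∈ Sset n d) : ∃ i : ℕ, n - d ≤ i ∧ i ≤ n - 1 ∧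
      e = s(((i : ℕ) : ZMod n), ((i + d + 1 : ℕ) : ZMod n)) ∧
      ((i : ℕ) : ZMod n).val = i ∧ ((i + d + 1 : ℕ) : ZMod n).val = i + d + 1 - n := by
  obtain ⟨i, h1, h2, rfl⟩ := he
  refine ⟨i, h1, h2, ?_, ?_, ?_⟩
  · congr 1
    push_cast
    ring
  · rw [ZMod.val_natCast, Nat.mod_eq_of_lt (by omega)]
  · rw [ZMod.val_natCast]
    rcases mod_helper (i + d + 1) n (by omega) with ⟨h3, h4⟩ | ⟨h3, h4⟩
    · omega
    · omega

lemma sset_unique {n d : ℕ} (hd : 2 ≤ d) (hn : 2*d+1 < n) {e1 e2 : Sym2 (ZMod n)}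
    (h1 : e1 ∈ Sset n d) (h2 : e2 ∈ Sset n d) {c : ZMod n}
    (hc1 : c ∈ e1) (hc2 : c ∈ e2) : e1 = e2 := by
  obtain ⟨i1, hi1a, hi1b, rfl, hv1, hw1⟩ := sset_val hd hn h1
  obtain ⟨i2, hi2a, hi2b, rfl, hv2, hw2⟩ := sset_val hd hn h2
  rw [Sym2.mem_iff] at hc1 hc2
  have : i1 = i2 := by
    rcases hc1 with rfl | rfl <;> rcases hc2 with h | h <;>
      [skip; skip; skip; skip] <;>
    · have := congrArg ZMod.val h
      omega
  subst this
  rfl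

lemma sset_adj_zero {n d : ℕ} (hd : 2 ≤ d) (hn : 2*d+1 < n) {e : Sym2 (ZMod n)}
    (he : e ∈ Sset n d) {p : ZMod n} (hp : p ∈ e) (hp0 : p ≠ 0) :
    (cyclePow n d).Adj 0 p := by
  obtain ⟨i, hia, hib, rfl, hv, hw⟩ := sset_val hd hn he
  rw [Sym2.mem_iff] at hp
  rcases hp with rfl | rfl
  · refine ⟨Ne.symm hp0, n - i, by omega, by omega, Or.inr ?_⟩
    rw [← Nat.cast_add]
    have : i + (n - i) = n := by omega
    rw [this, ZMod.natCast_self]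
  · refine ⟨Ne.symm hp0, i + d + 1 - n, by omega, by omega, Or.inl ?_⟩
    rw [zero_add]
    conv_lhs => rw [show i + d + 1 = (i + d + 1 - n) + n by omega]
    rw [Nat.cast_add, ZMod.natCast_self, add_zero]

end Stmt7Aux

open Stmt7Aux in
theorem stmt7 (d n : ℕ) (hd : 2 ≤ d) (hn : 2 * d + 1 < n)
    (f : ZMod n → Fin 2) (hf : BalancedColoring f)
    (hmaj : Nat.card {v | f v = 1} ≤ Nat.card {v | f v = 0})
    (h0 : f 0 = 0) :
    BalancedColoring (fun v : {v : ZMod n // v ≠ 0} => f v.val) ∧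
      mixedCount (Hgraph n d) (fun v => f v.val) ≤ mixedCount (cyclePow n d) f := by
  classical
  haveI : NeZero n := ⟨by omega⟩
  constructor
  · -- balancedness
    have himg0 : Subtype.val '' {v : {v : ZMod n // v ≠ 0} | f v.val = 0}
        = {v : ZMod n | f v = 0} \ {0} := by
      ext x
      constructor
      · rintro ⟨⟨y, hy⟩, hy0, rfl⟩
        exact ⟨hy0, hy⟩
      · rintro ⟨hx0, hx⟩
        exact ⟨⟨x, hx⟩, hx0, rfl⟩
    have himg1 : Subtype.val '' {v : {v : ZMod n // v ≠ 0} | f v.val = 1}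
        = {v : ZMod n | f v = 1} := by
      ext x
      constructor
      · rintro ⟨⟨y, hy⟩, hy0, rfl⟩
        exact hy0
      · intro hx
        have hx' : f x = 1 := hx
        have : x ≠ 0 := by rintro rfl; rw [h0] at hx'; exact absurd hx' (by decide)
        exact ⟨⟨x, this⟩, hx, rfl⟩
    have hc0 : Nat.card {v : {v : ZMod n // v ≠ 0} | f v.val = 0}
        = Nat.card {v : ZMod n | f v = 0} - 1 := by
      rw [Nat.card_coe_set_eq, Nat.card_coe_set_eq,
        ← Set.ncard_image_of_injective _ Subtype.val_injective, himg0,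
        Set.ncard_diff_singleton_of_mem (a := (0 : ZMod n)) (s := {v | f v = 0}) h0]
    have hc1 : Nat.card {v : {v : ZMod n // v ≠ 0} | f v.val = 1}
        = Nat.card {v : ZMod n | f v = 1} := by
      rw [Nat.card_coe_set_eq, Nat.card_coe_set_eq,
        ← Set.ncard_image_of_injective _ Subtype.val_injective, himg1]
    have hpos : 1 ≤ Nat.card {v : ZMod n | f v = 0} := by
      rw [Nat.card_coe_set_eq]
      exact (Set.ncard_pos (Set.toFinite _)).mpr ⟨0, h0⟩
    obtain ⟨hf1, hf2⟩ := hf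
    constructor <;> · simp only [hc0, hc1]; omega
  · -- edge count
    set G := cyclePow n d with hG
    have hBH : ∀ e ∈ bichromatic (Hgraph n d) (fun v : {v : ZMod n // v ≠ 0} => f v.val),
        ((0 : ZMod n) ∉ Sym2.map Subtype.val e) ∧
        (Sym2.lift ⟨fun a b => f a ≠ f b, fun a b => by simp [ne_comm]⟩
          (Sym2.map Subtype.val e)) ∧
        (Sym2.map Subtype.val e ∈ G.edgeSet ∨ Sym2.map Subtype.val e ∈ Sset n d) := by
      intro e he
      induction e using Sym2.ind with
      | _ a b =>
        obtain ⟨hadj, hbi⟩ := he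
        rw [SimpleGraph.mem_edgeSet] at hadj
        have hadj' : G.Adj a.val b.val ∨ (s(a.val, b.val) ∈ Sset n d ∧ a.val ≠ b.val) := by
          simpa [Hgraph, SimpleGraph.fromEdgeSet_adj] using hadj
        refine ⟨?_, ?_, ?_⟩
        · rw [Sym2.map_pair_eq, Sym2.mem_iff]
          rintro (h | h)
          exacts [a.2 h.symm, b.2 h.symm]
        · rw [Sym2.map_pair_eq]
          simpa using hbi
        · rw [Sym2.map_pair_eq, SimpleGraph.mem_edgeSet]
          tauto
    set F : Sym2 {v : ZMod n // v ≠ 0} → Sym2 (ZMod n) := fun e =>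
      if Sym2.map Subtype.val e ∈ G.edgeSet then Sym2.map Subtype.val e
      else s((0 : ZMod n), pick f (Sym2.map Subtype.val e)) with hF
    have hpick : ∀ e ∈ bichromatic (Hgraph n d) (fun v : {v : ZMod n // v ≠ 0} => f v.val),
        Sym2.map Subtype.val e ∉ G.edgeSet →
        (Sym2.map Subtype.val e ∈ Sset n d ∧
          pick f (Sym2.map Subtype.val e) ∈ Sym2.map Subtype.val e ∧
          f (pick f (Sym2.map Subtype.val e)) = 1) := by
      intro e he hnG
      obtain ⟨h0m, hbi, hor⟩ := hBH e he
      have hS : Sym2.map Subtype.val e ∈ Sset n d := by tauto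
      have hex : ∃ x ∈ Sym2.map Subtype.val e, f x = 1 := by
        induction e using Sym2.ind with
        | _ a b =>
          rw [Sym2.map_pair_eq] at hbi ⊢
          simp only [Sym2.lift_mk] at hbi
          rcases fin2 _ _ hbi with h | h
          · exact ⟨a.val, by simp, h⟩
          · exact ⟨b.val, by simp, h⟩
      obtain ⟨hm, h1⟩ := pick_spec f _ hex
      exact ⟨hS, hm, h1⟩
    rw [mixedCount, mixedCount]
    apply Set.ncard_le_ncard_of_injOn F
    · -- maps to
      intro e he
      by_cases hg : Sym2.map Subtype.val e ∈ G.edgeSet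
      · obtain ⟨h0m, hbi, hor⟩ := hBH e he
        rw [hF]
        simp only [hg, if_pos]
        exact ⟨hg, hbi⟩
      · obtain ⟨hS, hm, h1⟩ := hpick e he hg
        rw [hF]
        simp only [hg, if_neg, if_false]
        have hp0 : pick f (Sym2.map Subtype.val e) ≠ 0 := by
          rintro h
          rw [h, h0] at h1
          exact absurd h1 (by decide)
        refine ⟨?_, ?_⟩
        · rw [SimpleGraph.mem_edgeSet]
          exact sset_adj_zero hd hn hS hm hp0
        · simp only [Sym2.lift_mk]
          rw [h0, h1]
          decide
    · -- injective
      intro e1 he1 e2 he2 heq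
      by_cases hg1 : Sym2.map Subtype.val e1 ∈ G.edgeSet <;>
        by_cases hg2 : Sym2.map Subtype.val e2 ∈ G.edgeSet
      · rw [hF] at heq
        simp only [hg1, hg2, if_pos] at heq
        exact Sym2.map.injective Subtype.val_injective heq
      · exfalso
        obtain ⟨h0m, -, -⟩ := hBH e1 he1
        rw [hF] at heq
        simp only [hg1, hg2, if_pos, if_neg, if_false] at heq
        apply h0m
        rw [heq]
        simp
      · exfalso
        obtain ⟨h0m, -, -⟩ := hBH e2 he2
        rw [hF] at heq
        simp only [hg1, hg2, if_pos, if_neg, if_false] at heq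
        apply h0m
        rw [← heq]
        simp
      · obtain ⟨hS1, hm1, h11⟩ := hpick e1 he1 hg1
        obtain ⟨hS2, hm2, h12⟩ := hpick e2 he2 hg2
        rw [hF] at heq
        simp only [hg1, hg2, if_neg, if_false] at heq
        have hp1 : pick f (Sym2.map Subtype.val e1) ≠ 0 := by
          rintro h; rw [h, h0] at h11; exact absurd h11 (by decide)
        have hpp : pick f (Sym2.map Subtype.val e1) = pick f (Sym2.map Subtype.val e2) := by
          rw [Sym2.eq_iff] at heq
          rcases heq with ⟨-, h⟩ | ⟨h, h'⟩
          · exact h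
          · exact absurd h' hp1
        have : Sym2.map Subtype.val e1 = Sym2.map Subtype.val e2 :=
          sset_unique hd hn hS1 hS2 hm1 (hpp ▸ hm2)
        exact Sym2.map.injective Subtype.val_injective this
end

section
/- For d ≥ 2 and n > 2d+1, if σ⁻¹(C_{n−1}^d) ≥ d(d+1), then σ⁻¹(C_n^d) ≥ d(d+1). -/
namespace Stmt8Aux

open scoped Classical

lemma fin2_eq_of_ne_of_ne : ∀ p q r : Fin 2, p ≠ r → q ≠ r → p = q := by decide

lemma fin2_zero_or_one : ∀ p : Fin 2, p = 0 ∨ p = 1 := by decide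

lemma mem_bich {V : Type*} (G : SimpleGraph V) (f : V → Fin 2) (x y : V) :
    s(x, y) ∈ bichromatic G f ↔ G.Adj x y ∧ f x ≠ f y := by
  simp [bichromatic, SimpleGraph.mem_edgeSet]

lemma card_split {α : Type*} [Fintype α] (f : α → Fin 2) :
    Nat.card {v | f v = 0} + Nat.card {v | f v = 1} = Fintype.card α := by
  classical
  have h1 : ∀ v ∈ Finset.univ, (f v = 1) ↔ ¬ (f v = 0) := fun v _ => by
    rcases fin2_zero_or_one (f v) with h | h <;> simp [h]
  simp only [Nat.card_coe_set_eq, Set.ncard_eq_toFinset_card', Set.toFinset_setOf]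
  rw [Finset.filter_congr h1]
  exact Finset.card_filter_add_card_filter_not _

lemma nat_card_comp_add {n : ℕ} (f : ZMod n → Fin 2) (t : ZMod n) (c : Fin 2) :
    Nat.card {v : ZMod n | f (v + t) = c} = Nat.card {v : ZMod n | f v = c} :=
  Nat.card_congr (Equiv.subtypeEquiv (Equiv.addRight t) (fun v => by simp))

lemma adj_add {n d : ℕ} (u v t : ZMod n) :
    (cyclePow n d).Adj (u + t) (v + t) ↔ (cyclePow n d).Adj u v := by
  constructor <;> rintro ⟨h, j, h1, h2, h3⟩
  · refine ⟨fun hh => h (by rw [hh]), j, h1, h2, ?_⟩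
    rcases h3 with h3 | h3
    · exact Or.inl (add_right_cancel (b := t) (by rw [h3]; ring))
    · exact Or.inr (add_right_cancel (b := t) (by rw [h3]; ring))
  · refine ⟨fun hh => h (add_right_cancel hh), j, h1, h2, ?_⟩
    rcases h3 with h3 | h3
    · exact Or.inl (by rw [h3]; ring)
    · exact Or.inr (by rw [h3]; ring)

lemma rot_mixed {n d : ℕ} (f : ZMod n → Fin 2) (t : ZMod n) :
    mixedCount (cyclePow n d) (fun v => f (v + t)) = mixedCount (cyclePow n d) f := by
  have key : bichromatic (cyclePow n d) f
      = Sym2.map (· + t) '' bichromatic (cyclePow n d) (fun v => f (v + t)) := by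
    ext e
    induction e using Sym2.ind with
    | _ x y =>
      constructor
      · intro he
        rw [mem_bich] at he
        refine ⟨s(x - t, y - t), ?_, ?_⟩
        · rw [mem_bich]
          have hx : x - t + t = x := by ring
          have hy : y - t + t = y := by ring
          refine ⟨(adj_add _ _ t).mp ?_, ?_⟩
          · rw [hx, hy]; exact he.1
          · simpa [hx, hy] using he.2
        · rw [Sym2.map_pair_eq]
          congr 1 <;> ring
      · rintro ⟨e', he', heq⟩
        induction e' using Sym2.ind with
        | _ a b =>
          rw [mem_bich] at he'
          rw [Sym2.map_pair_eq] at heq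
          rw [← heq, mem_bich]
          exact ⟨(adj_add a b t).mpr he'.1, he'.2⟩
  rw [mixedCount, mixedCount, key,
    Set.ncard_image_of_injective _ (Sym2.map.injective (add_left_injective t))]

end Stmt8Aux

namespace Stmt8Aux

lemma val_add_nat {N : ℕ} [NeZero N] (u : ZMod N) (j : ℕ) :
    (u + (j : ZMod N)).val = (u.val + j) % N := by
  rw [ZMod.val_add, ZMod.val_natCast]
  conv_rhs => rw [Nat.add_mod, Nat.mod_eq_of_lt (ZMod.val_lt u)]

lemma zmod_eq_of_val {N : ℕ} [NeZero N] (u v : ZMod N) (j : ℕ)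
    (h : v.val = u.val + j ∨ v.val + N = u.val + j) : v = u + (j : ZMod N) := by
  have hu : ((u.val : ℕ) : ZMod N) = u := ZMod.natCast_rightInverse u
  have hv : ((v.val : ℕ) : ZMod N) = v := ZMod.natCast_rightInverse v
  rcases h with h | h
  · rw [← hu, ← hv, ← Nat.cast_add, ← h]
  · rw [← hu, ← hv, ← Nat.cast_add, ← h, Nat.cast_add, ZMod.natCast_self, add_zero]

lemma val_cases {N : ℕ} [NeZero N] (u v : ZMod N) (j : ℕ) (hjN : j < N)
    (h : v = u + (j : ZMod N)) : v.val = u.val + j ∨ v.val + N = u.val + j := by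
  have h1 : v.val = (u.val + j) % N := by rw [h, val_add_nat]
  have h2 := ZMod.val_lt u
  by_cases h3 : u.val + j < N
  · rw [Nat.mod_eq_of_lt h3] at h1; omega
  · have : (u.val + j) % N = u.val + j - N := by
      rw [Nat.mod_eq_sub_mod (by omega), Nat.mod_eq_of_lt (by omega)]
    omega

section Main

variable {d m : ℕ} [NeZero m]

/-- the embedding of `ZMod m` into `ZMod (m+1)` -/
def ι : ZMod m → ZMod (m + 1) := fun x => ((x.val : ℕ) : ZMod (m + 1))

/-- the deleted vertex -/
def w : ZMod (m + 1) := (m : ZMod (m + 1))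

lemma val_ι (x : ZMod m) : (ι x).val = x.val :=
  ZMod.val_cast_of_lt (lt_trans (ZMod.val_lt x) (Nat.lt_succ_self m))

lemma val_w : (w : ZMod (m + 1)).val = m := ZMod.val_cast_of_lt (Nat.lt_succ_self m)

lemma ι_inj : Function.Injective (ι : ZMod m → ZMod (m + 1)) := fun a b h => by
  apply ZMod.val_injective
  have := congrArg ZMod.val h
  rwa [val_ι, val_ι] at this

lemma ι_ne_w (x : ZMod m) : ι x ≠ (w : ZMod (m + 1)) := fun h => by
  have := congrArg ZMod.val h
  rw [val_ι, val_w] at this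
  exact absurd this (Nat.ne_of_lt (ZMod.val_lt x))

variable (hd : 2 ≤ d) (hm : 2 * d + 1 ≤ m)
include hd hm

lemma key1' (x y : ZMod m) (j : ℕ) (hj1 : 1 ≤ j) (hjd : j ≤ d) (hne : x ≠ y)
    (h : y = x + (j : ZMod m)) :
    (cyclePow (m + 1) d).Adj (ι x) (ι y) ∨
      ((cyclePow (m + 1) d).Adj w (ι x) ∧ (cyclePow (m + 1) d).Adj w (ι y)) := by
  have hvx := ZMod.val_lt x
  have hvy := ZMod.val_lt y
  rcases val_cases x y j (by omega) h with hv | hv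
  · left
    refine ⟨fun hh => hne (ι_inj hh), j, hj1, hjd, Or.inl ?_⟩
    exact zmod_eq_of_val _ _ _ (Or.inl (by rw [val_ι, val_ι]; omega))
  · right
    constructor
    · refine ⟨fun hh => ι_ne_w x hh.symm, m - x.val, by omega, by omega, Or.inr ?_⟩
      exact zmod_eq_of_val _ _ _ (Or.inl (by rw [val_ι, val_w]; omega))
    · refine ⟨fun hh => ι_ne_w y hh.symm, y.val + 1, by omega, by omega, Or.inl ?_⟩
      exact zmod_eq_of_val _ _ _ (Or.inr (by rw [val_ι, val_w]; omega))

lemma key1 (x y : ZMod m) (hxy : (cyclePow m d).Adj x y) :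
    (cyclePow (m + 1) d).Adj (ι x) (ι y) ∨
      ((cyclePow (m + 1) d).Adj w (ι x) ∧ (cyclePow (m + 1) d).Adj w (ι y)) := by
  obtain ⟨hne, j, hj1, hjd, hcase⟩ := hxy
  rcases hcase with h | h
  · exact key1' hd hm x y j hj1 hjd hne h
  · rcases key1' hd hm y x j hj1 hjd (Ne.symm hne) h with h' | h'
    · exact Or.inl h'.symm
    · exact Or.inr ⟨h'.2, h'.1⟩

lemma char_nonedge (x y : ZMod m) (h1 : (cyclePow m d).Adj x y)
    (h2 : ¬ (cyclePow (m + 1) d).Adj (ι x) (ι y)) :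
    (y.val + m = x.val + d) ∨ (x.val + m = y.val + d) := by
  obtain ⟨hne, j, hj1, hjd, hcase⟩ := h1
  have hvx := ZMod.val_lt x
  have hvy := ZMod.val_lt y
  have hιne : ι x ≠ ι y := fun hh => hne (ι_inj hh)
  rcases hcase with h | h
  · rcases val_cases x y j (by omega) h with hv | hv
    · exfalso
      exact h2 ⟨hιne, j, hj1, hjd, Or.inl (zmod_eq_of_val _ _ _
        (Or.inl (by rw [val_ι, val_ι]; omega)))⟩
    · -- wrap: y.val + m = x.val + j; then ι y = ι x + (j+1) in ZMod (m+1)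
      have hstep : ι y = ι x + ((j + 1 : ℕ) : ZMod (m + 1)) :=
        zmod_eq_of_val _ _ _ (Or.inr (by rw [val_ι, val_ι]; omega))
      by_cases hjd1 : j + 1 ≤ d
      · exact absurd ⟨hιne, j + 1, by omega, hjd1, Or.inl hstep⟩ h2
      · left; omega
  · rcases val_cases y x j (by omega) h with hv | hv
    · exfalso
      exact h2 ⟨hιne, j, hj1, hjd, Or.inr (zmod_eq_of_val _ _ _
        (Or.inl (by rw [val_ι, val_ι]; omega)))⟩
    · have hstep : ι x = ι y + ((j + 1 : ℕ) : ZMod (m + 1)) :=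
        zmod_eq_of_val _ _ _ (Or.inr (by rw [val_ι, val_ι]; omega))
      by_cases hjd1 : j + 1 ≤ d
      · exact absurd ⟨hιne, j + 1, by omega, hjd1, Or.inr hstep⟩ h2
      · right; omega

lemma key2 (x y y' : ZMod m) (h1 : (cyclePow m d).Adj x y)
    (h2 : ¬ (cyclePow (m + 1) d).Adj (ι x) (ι y))
    (h1' : (cyclePow m d).Adj x y')
    (h2' : ¬ (cyclePow (m + 1) d).Adj (ι x) (ι y')) : y = y' := by
  have hvx := ZMod.val_lt x
  have hvy := ZMod.val_lt y
  have hvy' := ZMod.val_lt y'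
  rcases char_nonedge hd hm x y h1 h2 with hc | hc <;>
    rcases char_nonedge hd hm x y' h1' h2' with hc' | hc' <;>
    · exact ZMod.val_injective m (by omega)

end Main

end Stmt8Aux

namespace Stmt8Aux

section Main2

open scoped Classical

variable {d m : ℕ} [NeZero m]

/-- The map sending bichromatic edges of `C_m^d` (colored by `f ∘ ι`) to bichromatic
edges of `C_{m+1}^d` (colored by `f`). -/
noncomputable def Phi (d : ℕ) (f : ZMod (m + 1) → Fin 2) : Sym2 (ZMod m) → Sym2 (ZMod (m + 1)) :=
  Sym2.lift ⟨fun x y =>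
    if (cyclePow (m + 1) d).Adj (ι x) (ι y) then s(ι x, ι y)
    else if f (ι x) ≠ f w ∧ f (ι y) = f w then s(w, ι x)
    else if f (ι y) ≠ f w ∧ f (ι x) = f w then s(w, ι y)
    else s(ι x, ι y), by
    intro a b
    dsimp only
    by_cases h1 : (cyclePow (m + 1) d).Adj (ι a) (ι b)
    · rw [if_pos h1, if_pos h1.symm, Sym2.eq_swap]
    · have h1' : ¬ (cyclePow (m + 1) d).Adj (ι b) (ι a) := fun hh => h1 hh.symm
      rw [if_neg h1, if_neg h1']
      by_cases h2 : f (ι a) ≠ f w ∧ f (ι b) = f w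
      · rw [if_pos h2, if_neg (fun h3 => h3.1 h2.2), if_pos ⟨h2.1, h2.2⟩]
      · by_cases h3 : f (ι b) ≠ f w ∧ f (ι a) = f w
        · rw [if_neg h2, if_pos h3, if_pos ⟨h3.1, h3.2⟩]
        · rw [if_neg h2, if_neg h3, if_neg h3, if_neg h2, Sym2.eq_swap]⟩

variable (hd : 2 ≤ d) (hm : 2 * d + 1 ≤ m)
include hd hm

lemma phi_spec (f : ZMod (m + 1) → Fin 2) (x y : ZMod m)
    (hadj : (cyclePow m d).Adj x y) (hcol : f (ι x) ≠ f (ι y)) :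
    ((cyclePow (m + 1) d).Adj (ι x) (ι y) ∧ Phi d f s(x, y) = s(ι x, ι y)) ∨
    (∃ u v : ZMod m, s(x, y) = s(u, v) ∧ ¬ (cyclePow (m + 1) d).Adj (ι u) (ι v) ∧
      f (ι u) ≠ f w ∧ f (ι v) = f w ∧ Phi d f s(x, y) = s(w, ι u)) := by
  have hmk : ∀ a b : ZMod m, Phi d f s(a, b) =
      if (cyclePow (m + 1) d).Adj (ι a) (ι b) then s(ι a, ι b)
      else if f (ι a) ≠ f w ∧ f (ι b) = f w then s(w, ι a)
      else if f (ι b) ≠ f w ∧ f (ι a) = f w then s(w, ι b)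
      else s(ι a, ι b) := fun a b => rfl
  by_cases h1 : (cyclePow (m + 1) d).Adj (ι x) (ι y)
  · left
    exact ⟨h1, by rw [hmk, if_pos h1]⟩
  · right
    by_cases h2 : f (ι x) ≠ f w ∧ f (ι y) = f w
    · exact ⟨x, y, rfl, h1, h2.1, h2.2, by rw [hmk, if_neg h1, if_pos h2]⟩
    · have hyw : f (ι y) ≠ f w := by
        intro hyw
        have hxw : f (ι x) ≠ f w := fun hxw => hcol (hxw.trans hyw.symm)
        exact h2 ⟨hxw, hyw⟩
      have hxw : f (ι x) = f w := fin2_eq_of_ne_of_ne _ _ _ hcol (Ne.symm hyw)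
      refine ⟨y, x, Sym2.eq_swap, fun hh => h1 hh.symm, hyw, hxw, ?_⟩
      rw [hmk, if_neg h1, if_neg h2, if_pos ⟨hyw, hxw⟩]

lemma phi_maps (f : ZMod (m + 1) → Fin 2) :
    ∀ e ∈ bichromatic (cyclePow m d) (fun x => f (ι x)),
      Phi d f e ∈ bichromatic (cyclePow (m + 1) d) f := by
  intro e
  induction e using Sym2.ind with
  | _ x y =>
    intro he
    rw [mem_bich] at he
    obtain ⟨hadj, hcol⟩ := he
    rcases phi_spec hd hm f x y hadj hcol with ⟨h1, heq⟩ | ⟨u, v, hsm, hna, hcu, hcv, heq⟩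
    · rw [heq, mem_bich]
      exact ⟨h1, hcol⟩
    · have hadj' : (cyclePow m d).Adj u v := by
        rcases Sym2.eq_iff.mp hsm with ⟨hu, hv⟩ | ⟨hu, hv⟩
        · rw [← hu, ← hv]; exact hadj
        · rw [← hu, ← hv]; exact hadj.symm
      have hw := key1 hd hm u v hadj'
      rcases hw with hw | hw
      · exact absurd hw hna
      · rw [heq, mem_bich]
        exact ⟨hw.1, fun hh => hcu hh.symm⟩

lemma phi_inj (f : ZMod (m + 1) → Fin 2) :
    Set.InjOn (Phi d f) (bichromatic (cyclePow m d) (fun x => f (ι x))) := by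
  intro e he e' he' heq
  induction e, e' using Sym2.inductionOn₂ with
  | _ x y x' y' =>
    rw [mem_bich] at he he'
    obtain ⟨hadj, hcol⟩ := he
    obtain ⟨hadj', hcol'⟩ := he'
    rcases phi_spec hd hm f x y hadj hcol with ⟨h1, hq⟩ | ⟨u, v, hsm, hna, hcu, hcv, hq⟩ <;>
      rcases phi_spec hd hm f x' y' hadj' hcol' with ⟨h1', hq'⟩ | ⟨u', v', hsm', hna', hcu', hcv', hq'⟩
    · rw [hq, hq', ← Sym2.map_pair_eq, ← Sym2.map_pair_eq] at heq
      exact Sym2.map.injective ι_inj heq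
    · rw [hq, hq'] at heq
      rcases Sym2.eq_iff.mp heq with ⟨ha, _⟩ | ⟨_, hb⟩
      · exact absurd ha (ι_ne_w x)
      · exact absurd hb (ι_ne_w y)
    · rw [hq, hq'] at heq
      rcases Sym2.eq_iff.mp heq with ⟨ha, _⟩ | ⟨ha, _⟩
      · exact absurd ha.symm (ι_ne_w x')
      · exact absurd ha.symm (ι_ne_w y')
    · rw [hq, hq'] at heq
      have huv : ι u = ι u' := by
        rcases Sym2.eq_iff.mp heq with ⟨_, hb⟩ | ⟨ha, _⟩
        · exact hb
        · exact absurd ha.symm (ι_ne_w u')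
      have hu : u = u' := ι_inj huv
      have hadju : (cyclePow m d).Adj u v := by
        rcases Sym2.eq_iff.mp hsm with ⟨h1, h2⟩ | ⟨h1, h2⟩
        · rw [← h1, ← h2]; exact hadj
        · rw [← h1, ← h2]; exact hadj.symm
      have hadju' : (cyclePow m d).Adj u' v' := by
        rcases Sym2.eq_iff.mp hsm' with ⟨h1, h2⟩ | ⟨h1, h2⟩
        · rw [← h1, ← h2]; exact hadj'
        · rw [← h1, ← h2]; exact hadj'.symm
      have hv : v = v' := by
        refine key2 hd hm u v v' hadju hna ?_ ?_
        · rw [hu]; exact hadju'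
        · rw [hu]; exact hna'
      rw [hsm, hsm', hu, hv]

end Main2

end Stmt8Aux

namespace Stmt8Aux

section Main3

open scoped Classical

variable {d m : ℕ} [NeZero m]

lemma card_g (f : ZMod (m + 1) → Fin 2) (c : Fin 2) :
    Nat.card {x : ZMod m | f (ι x) = c} + (if f w = c then 1 else 0)
      = Nat.card {v : ZMod (m + 1) | f v = c} := by
  classical
  have himg : (Finset.univ.image (ι : ZMod m → ZMod (m + 1))) = Finset.univ.erase w := by
    apply Finset.eq_of_subset_of_card_le
    · intro v hv
      rcases Finset.mem_image.mp hv with ⟨x, _, rfl⟩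
      exact Finset.mem_erase.mpr ⟨ι_ne_w x, Finset.mem_univ _⟩
    · rw [Finset.card_erase_of_mem (Finset.mem_univ _),
        Finset.card_image_of_injective _ ι_inj, Finset.card_univ, Finset.card_univ,
        ZMod.card, ZMod.card]
      omega
  have hfe : ((Finset.univ.erase w).filter (fun v => f v = c)).card
      = (Finset.univ.filter (fun x : ZMod m => f (ι x) = c)).card := by
    rw [← himg, Finset.filter_image, Finset.card_image_of_injective _ ι_inj]
  simp only [Nat.card_coe_set_eq, Set.ncard_eq_toFinset_card', Set.toFinset_setOf]
  conv_rhs => rw [← Finset.insert_erase (Finset.mem_univ w), Finset.filter_insert]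
  by_cases hc : f w = c
  · rw [if_pos hc, if_pos hc,
      Finset.card_insert_of_notMem
        (fun hh => (Finset.mem_erase.mp (Finset.mem_filter.mp hh).1).1 rfl), hfe]
  · rw [if_neg hc, if_neg hc, hfe, add_zero]

variable (hd : 2 ≤ d) (hm : 2 * d + 1 ≤ m)
include hd hm

lemma main (f : ZMod (m + 1) → Fin 2) (hbal : BalancedColoring f)
    (hmaj : ∀ c : Fin 2, Nat.card {v : ZMod (m + 1) | f v = c}
      ≤ Nat.card {v : ZMod (m + 1) | f v = f w}) :
    ∃ g : ZMod m → Fin 2, BalancedColoring g ∧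
      mixedCount (cyclePow m d) g ≤ mixedCount (cyclePow (m + 1) d) f := by
  refine ⟨fun x => f (ι x), ?_, ?_⟩
  · have h0 := card_g f 0
    have h1 := card_g f 1
    have hs := card_split (fun x : ZMod m => f (ι x))
    have hs' := card_split f
    rw [ZMod.card] at hs hs'
    obtain ⟨hb1, hb2⟩ := hbal
    have hmaj0 := hmaj 0
    have hmaj1 := hmaj 1
    rcases fin2_zero_or_one (f w) with hw | hw <;>
      · rw [hw] at hmaj0 hmaj1
        rw [hw] at h0 h1
        simp only [reduceIte] at h0 h1
        constructor
        · show (Nat.card {x : ZMod m | f (ι x) = 0} : ℤ)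
            - (Nat.card {x : ZMod m | f (ι x) = 1} : ℤ) ≤ 1
          omega
        · show (Nat.card {x : ZMod m | f (ι x) = 1} : ℤ)
            - (Nat.card {x : ZMod m | f (ι x) = 0} : ℤ) ≤ 1
          omega
  · exact Set.ncard_le_ncard_of_injOn _ (phi_maps hd hm f) (phi_inj hd hm f) (Set.toFinite _)

end Main3

lemma exists_balanced (N : ℕ) [NeZero N] : ∃ f : ZMod N → Fin 2, BalancedColoring f := by
  classical
  set f : ZMod N → Fin 2 := fun v => if 2 * v.val < N then 0 else 1 with hf
  have hset : {v : ZMod N | f v = 0} = {v : ZMod N | 2 * v.val < N} := by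
    ext v
    simp only [hf, Set.mem_setOf_eq]
    by_cases h : 2 * v.val < N <;> simp [h]
  have hcard : Nat.card {v : ZMod N | f v = 0} = (N + 1) / 2 := by
    rw [hset]
    simp only [Nat.card_coe_set_eq, Set.ncard_eq_toFinset_card', Set.toFinset_setOf]
    have himg : (Finset.univ.image (ZMod.val : ZMod N → ℕ)) = Finset.range N := by
      apply Finset.eq_of_subset_of_card_le
      · intro k hk
        rcases Finset.mem_image.mp hk with ⟨v, _, rfl⟩
        exact Finset.mem_range.mpr (ZMod.val_lt v)
      · rw [Finset.card_range, Finset.card_image_of_injective _ (ZMod.val_injective N),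
          Finset.card_univ, ZMod.card]
    have h2 : (Finset.univ.filter (fun v : ZMod N => 2 * v.val < N)).card
        = ((Finset.range N).filter (fun k => 2 * k < N)).card := by
      rw [← himg, Finset.filter_image, Finset.card_image_of_injective _ (ZMod.val_injective N)]
    rw [h2]
    have h3 : (Finset.range N).filter (fun k => 2 * k < N) = Finset.range ((N + 1) / 2) := by
      ext k
      simp only [Finset.mem_filter, Finset.mem_range]
      omega
    rw [h3, Finset.card_range]
  have hsum := card_split f
  rw [ZMod.card] at hsum
  have hN := Nat.pos_of_ne_zero (NeZero.ne N)
  exact ⟨f, by constructor <;> omega⟩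

end Stmt8Aux

theorem stmt8 (d n : ℕ) (hd : 2 ≤ d) (hn : 2 * d + 1 < n)
    (h : d * (d + 1) ≤ rna (cyclePow (n - 1) d)) :
    d * (d + 1) ≤ rna (cyclePow n d) := by
  classical
  obtain ⟨m, rfl⟩ : ∃ m, n = m + 1 := ⟨n - 1, by omega⟩
  have hm : 2 * d + 1 ≤ m := by omega
  haveI : NeZero m := ⟨by omega⟩
  replace h : d * (d + 1) ≤ rna (cyclePow m d) := h
  apply le_csInf
  · obtain ⟨f, hf⟩ := Stmt8Aux.exists_balanced (m + 1)
    exact ⟨mixedCount (cyclePow (m + 1) d) f, f, hf, rfl⟩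
  · rintro k ⟨f, hbal, rfl⟩
    obtain ⟨c, hcmaj⟩ : ∃ c : Fin 2, ∀ c' : Fin 2,
        Nat.card {v : ZMod (m + 1) | f v = c'} ≤ Nat.card {v : ZMod (m + 1) | f v = c} := by
      rcases le_total (Nat.card {v : ZMod (m + 1) | f v = 1})
          (Nat.card {v : ZMod (m + 1) | f v = 0}) with hc | hc
      · refine ⟨0, fun c' => ?_⟩
        rcases Stmt8Aux.fin2_zero_or_one c' with rfl | rfl
        · exact le_refl _
        · exact hc
      · refine ⟨1, fun c' => ?_⟩
        rcases Stmt8Aux.fin2_zero_or_one c' with rfl | rfl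
        · exact hc
        · exact le_refl _
    have hsum := Stmt8Aux.card_split f
    rw [ZMod.card] at hsum
    have hpos : 0 < Nat.card {v : ZMod (m + 1) | f v = c} := by
      have hc0 := hcmaj 0
      have hc1 := hcmaj 1
      omega
    obtain ⟨u, hu⟩ : ∃ u : ZMod (m + 1), f u = c := by
      have hne : {v : ZMod (m + 1) | f v = c}.Nonempty := by
        apply Set.nonempty_of_ncard_ne_zero
        rw [← Nat.card_coe_set_eq]
        omega
      exact hne
    set t := u - Stmt8Aux.w with ht
    have hwt : (Stmt8Aux.w : ZMod (m + 1)) + t = u := by rw [ht]; ring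
    have hf'w : f (Stmt8Aux.w + t) = c := by rw [hwt, hu]
    have hbal' : BalancedColoring (fun v : ZMod (m + 1) => f (v + t)) := by
      constructor
      · show (Nat.card {v : ZMod (m + 1) | f (v + t) = 0} : ℤ)
          - (Nat.card {v : ZMod (m + 1) | f (v + t) = 1} : ℤ) ≤ 1
        rw [Stmt8Aux.nat_card_comp_add f t 0, Stmt8Aux.nat_card_comp_add f t 1]
        exact hbal.1
      · show (Nat.card {v : ZMod (m + 1) | f (v + t) = 1} : ℤ)
          - (Nat.card {v : ZMod (m + 1) | f (v + t) = 0} : ℤ) ≤ 1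
        rw [Stmt8Aux.nat_card_comp_add f t 0, Stmt8Aux.nat_card_comp_add f t 1]
        exact hbal.2
    have hmaj' : ∀ c' : Fin 2,
        Nat.card {v : ZMod (m + 1) | (fun v => f (v + t)) v = c'}
          ≤ Nat.card {v : ZMod (m + 1) | (fun v => f (v + t)) v
              = (fun v => f (v + t)) Stmt8Aux.w} := by
      intro c'
      show Nat.card {v : ZMod (m + 1) | f (v + t) = c'}
        ≤ Nat.card {v : ZMod (m + 1) | f (v + t) = f (Stmt8Aux.w + t)}
      rw [hf'w, Stmt8Aux.nat_card_comp_add f t c',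
        Stmt8Aux.nat_card_comp_add f t c]
      exact hcmaj c'
    obtain ⟨g, hgbal, hgle⟩ := Stmt8Aux.main hd hm (fun v => f (v + t)) hbal' hmaj'
    calc d * (d + 1) ≤ rna (cyclePow m d) := h
      _ ≤ mixedCount (cyclePow m d) g := Nat.sInf_le ⟨g, hgbal, rfl⟩
      _ ≤ mixedCount (cyclePow (m + 1) d) (fun v => f (v + t)) := hgle
      _ = mixedCount (cyclePow (m + 1) d) f := Stmt8Aux.rot_mixed f t
end

section
/- For d ≥ 2 and n ≥ 2d+1, σ⁻¹(C_n^d) ≥ 2d. -/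
open Finset
set_option linter.unusedSectionVars false
set_option linter.unusedVariables false


section Aux
variable {n : ℕ} [NeZero n] (χ : ZMod n → Fin 2)

lemma fin2_cases (a : Fin 2) : a = 0 ∨ a = 1 := by fin_cases a <;> simp

def chg (h : ZMod n) : Finset (ZMod n) := univ.filter fun x => χ x ≠ χ (x + h)
def U0 (h : ZMod n) : Finset (ZMod n) := univ.filter fun x => χ x = 0 ∧ χ (x + h) = 1
def U1 (h : ZMod n) : Finset (ZMod n) := univ.filter fun x => χ x = 1 ∧ χ (x + h) = 0

lemma chg_card (h : ZMod n) : (chg χ h).card = (U0 χ h).card + (U1 χ h).card := by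
  rw [← Finset.card_union_of_disjoint]
  · congr 1
    ext x
    simp only [chg, U0, U1, mem_union, mem_filter, mem_univ, true_and]
    rcases fin2_cases (χ x) with h1 | h1 <;> rcases fin2_cases (χ (x+h)) with h2 | h2 <;>
      simp [h1, h2]
  · simp only [U0, U1, disjoint_filter_filter']
    rw [Finset.disjoint_filter]
    rintro x - ⟨h1, -⟩ ⟨h2, -⟩
    rw [h1] at h2; exact absurd h2 (by decide)

lemma U0_card_eq (h : ZMod n) : (U0 χ h).card = (U1 χ h).card := by
  have b1 : (U1 χ h).card = (univ.filter fun y => χ y = 0 ∧ χ (y - h) = 1).card := by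
    apply Finset.card_bij (fun x _ => x + h)
    · intro x hx
      simp only [U1, mem_filter, mem_univ, true_and] at hx ⊢
      simpa [hx.2] using hx.1
    · intro x hx y hy hxy; exact add_right_cancel hxy
    · intro y hy
      simp only [mem_filter, mem_univ, true_and] at hy
      exact ⟨y - h, by simp [U1, mem_filter, hy.1, hy.2], by ring⟩
  have b2 : (univ.filter fun y => χ y = 0 ∧ χ (y - h) = 0).card
      = (univ.filter fun x => χ x = 0 ∧ χ (x + h) = 0).card := by
    apply Finset.card_bij (fun y _ => y - h)
    · intro x hx
      simp only [mem_filter, mem_univ, true_and] at hx ⊢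
      exact ⟨hx.2, by simpa using hx.1⟩
    · intro x hx y hy hxy; exact by simpa using congrArg (· + h) hxy
    · intro y hy
      simp only [mem_filter, mem_univ, true_and] at hy
      exact ⟨y + h, by simp [mem_filter, hy.1, hy.2], by ring⟩
  have s1 : (U0 χ h).card + (univ.filter fun x => χ x = 0 ∧ χ (x + h) = 0).card
      = (univ.filter fun x => χ x = 0).card := by
    rw [U0]
    rw [show (univ.filter fun x : ZMod n => χ x = 0 ∧ χ (x + h) = 1)
        = (univ.filter fun x : ZMod n => χ x = 0).filter (fun x => χ (x+h) = 1) by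
      rw [Finset.filter_filter]]
    rw [show (univ.filter fun x : ZMod n => χ x = 0 ∧ χ (x + h) = 0)
        = (univ.filter fun x : ZMod n => χ x = 0).filter (fun x => ¬ (χ (x+h) = 1)) by
      rw [Finset.filter_filter]; congr 1; ext x;
      rcases fin2_cases (χ (x+h)) with h2|h2 <;> simp [h2]]
    exact Finset.card_filter_add_card_filter_not _
  have s2 : (univ.filter fun y => χ y = 0 ∧ χ (y - h) = 1).card
      + (univ.filter fun y => χ y = 0 ∧ χ (y - h) = 0).card
      = (univ.filter fun x => χ x = 0).card := by
    rw [show (univ.filter fun y : ZMod n => χ y = 0 ∧ χ (y - h) = 1)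
        = (univ.filter fun y : ZMod n => χ y = 0).filter (fun y => χ (y-h) = 1) by
      rw [Finset.filter_filter]]
    rw [show (univ.filter fun y : ZMod n => χ y = 0 ∧ χ (y - h) = 0)
        = (univ.filter fun y : ZMod n => χ y = 0).filter (fun y => ¬ (χ (y-h) = 1)) by
      rw [Finset.filter_filter]; congr 1; ext y;
      rcases fin2_cases (χ (y-h)) with h2|h2 <;> simp [h2]]
    exact Finset.card_filter_add_card_filter_not _
  omega

lemma chg_card_two_mul (h : ZMod n) : (chg χ h).card = 2 * (U0 χ h).card := by
  rw [chg_card, U0_card_eq]; ring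

end Aux


section Aux2
variable {n : ℕ} [NeZero n]

lemma card_ge_orbit {S : Finset (ZMod n)} {c : ZMod n} (m : ℕ)
    (hinv : ∀ x, x ∈ S → x + c ∈ S)
    (hord : ∀ k : ℕ, 0 < k → k < m → k • c ≠ 0)
    (hne : S.Nonempty) : m ≤ S.card := by
  obtain ⟨x0, hx0⟩ := hne
  have hmem : ∀ k : ℕ, x0 + k • c ∈ S := by
    intro k
    induction k with
    | zero => simpa using hx0
    | succ k ih =>
        have := hinv _ ih
        rwa [add_assoc, ← succ_nsmul] at this
  have hsub : (Finset.range m).image (fun k => x0 + k • c) ⊆ S := by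
    intro y hy
    simp only [mem_image, mem_range] at hy
    obtain ⟨k, -, rfl⟩ := hy
    exact hmem k
  have hinj : ∀ a < m, ∀ b < m, x0 + a • c = x0 + b • c → a = b := by
    have key : ∀ a b, a < b → b < m → x0 + a • c = x0 + b • c → False := by
      intro a b hab hbm heq
      have h2 : a • c = b • c := add_left_cancel heq
      have h1 : a • c + (b - a) • c = b • c := by
        rw [← add_nsmul]; congr 1; omega
      rw [h2, add_eq_left] at h1
      exact hord (b - a) (by omega) (by omega) h1
    intro a ha b hb heq
    rcases lt_trichotomy a b with h | h | h
    · exact absurd (key a b h hb heq) (by simp)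
    · exact h
    · exact absurd (key b a h ha heq.symm) (by simp)
  calc m = ((Finset.range m).image (fun k => x0 + k • c)).card := by
            rw [Finset.card_image_of_injOn, Finset.card_range]
            intro a ha b hb hab
            simp only [Finset.coe_range, Set.mem_Iio] at ha hb
            exact hinj a ha b hb hab
       _ ≤ S.card := Finset.card_le_card hsub

end Aux2

section Main
variable {n : ℕ} [NeZero n]
lemma natcard_setOf {α : Type*} [Fintype α] (p : α → Prop) [DecidablePred p] :
    Nat.card {v | p v} = (univ.filter p).card := by
  rw [Nat.card_eq_fintype_card]
  convert Fintype.card_subtype p using 2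
  rfl

lemma card_val_lt (k : ℕ) (hk : k ≤ n) :
    (univ.filter fun v : ZMod n => v.val < k).card = k := by
  rw [← Finset.card_range k]
  apply Finset.card_bij (fun v _ => v.val)
  · intro v hv
    simp only [mem_filter, mem_univ, true_and] at hv
    simpa using hv
  · intro a _ b _ h
    exact ZMod.val_injective n h
  · intro b hb
    rw [mem_range] at hb
    exact ⟨(b : ZMod n), by simp [ZMod.val_cast_of_lt (lt_of_lt_of_le hb hk), hb],
      ZMod.val_cast_of_lt (lt_of_lt_of_le hb hk)⟩

lemma count_lower (d : ℕ) (hd : 2 ≤ d) (hn : 2*d+1 ≤ n) (f : ZMod n → Fin 2) :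
    ∑ j ∈ Finset.Icc 1 d, (chg f (j : ZMod n)).card ≤ mixedCount (cyclePow n d) f := by
  classical
  have hcast_inj : ∀ a ∈ Finset.Icc 1 d, ∀ b ∈ Finset.Icc 1 d,
      (a : ZMod n) = (b : ZMod n) → a = b := by
    intro a ha b hb h
    rw [mem_Icc] at ha hb
    have : ((a : ZMod n)).val = ((b : ZMod n)).val := by rw [h]
    rwa [ZMod.val_cast_of_lt (by omega), ZMod.val_cast_of_lt (by omega)] at this
  have hsum_ne : ∀ a ∈ Finset.Icc 1 d, ∀ b ∈ Finset.Icc 1 d,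
      ∀ y : ZMod n, y + (b : ZMod n) + (a : ZMod n) ≠ y := by
    intro a ha b hb y h
    rw [mem_Icc] at ha hb
    have : ((b + a : ℕ) : ZMod n) = 0 := by
      push_cast; linear_combination h
    rw [ZMod.natCast_eq_zero_iff] at this
    have := Nat.le_of_dvd (by omega) this
    omega
  set E : ℕ → Finset (Sym2 (ZMod n)) :=
    fun j => (chg f (j:ZMod n)).image (fun x => s(x, x + (j:ZMod n))) with hE
  have hEcard : ∀ j ∈ Finset.Icc 1 d, (E j).card = (chg f (j:ZMod n)).card := by
    intro j hj
    apply Finset.card_image_of_injOn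
    intro a _ b _ hab
    rw [Sym2.mk_eq_mk_iff (p := (a, a + (j:ZMod n))) (q := (b, b + (j:ZMod n)))] at hab
    rcases hab with h | h
    · exact (Prod.ext_iff.mp h).1
    · simp only [Prod.swap_prod_mk, Prod.mk.injEq] at h
      exfalso
      exact hsum_ne j hj j hj b (by rw [← h.1, h.2])
  have hdisj : ∀ a ∈ Finset.Icc 1 d, ∀ b ∈ Finset.Icc 1 d, a ≠ b → Disjoint (E a) (E b) := by
    intro a ha b hb hne
    rw [Finset.disjoint_left]
    intro e hea heb
    simp only [hE, Finset.mem_image] at hea heb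
    obtain ⟨x, -, rfl⟩ := hea
    obtain ⟨y, -, hxy⟩ := heb
    rw [Sym2.mk_eq_mk_iff (p := (y, y + (b:ZMod n))) (q := (x, x + (a:ZMod n)))] at hxy
    rcases hxy with h | h
    · simp only [Prod.mk.injEq] at h
      have h2 : y + (b : ZMod n) = y + (a : ZMod n) := by rw [h.2]; rw [h.1]
      exact hne (hcast_inj a ha b hb (add_left_cancel h2).symm)
    · simp only [Prod.swap_prod_mk, Prod.mk.injEq] at h
      exact hsum_ne a ha b hb y (by rw [h.2, ← h.1])
  have hsub : ↑((Finset.Icc 1 d).biUnion E) ⊆ bichromatic (cyclePow n d) f := by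
    intro e he
    simp only [Finset.coe_biUnion, Set.mem_iUnion, Finset.mem_coe, Finset.mem_biUnion] at he
    obtain ⟨j, hj, he⟩ := he
    simp only [hE, Finset.mem_image] at he
    obtain ⟨x, hx, rfl⟩ := he
    simp only [chg, mem_filter, mem_univ, true_and] at hx
    rw [mem_Icc] at hj
    constructor
    · rw [SimpleGraph.mem_edgeSet]
      exact ⟨fun h => hx (congrArg f h), j, hj.1, hj.2, Or.inl rfl⟩
    · simpa using hx
  calc ∑ j ∈ Finset.Icc 1 d, (chg f (j : ZMod n)).card
      = ∑ j ∈ Finset.Icc 1 d, (E j).card := by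
        exact (Finset.sum_congr rfl hEcard).symm
    _ = ((Finset.Icc 1 d).biUnion E).card := (Finset.card_biUnion hdisj).symm
    _ = (↑((Finset.Icc 1 d).biUnion E) : Set (Sym2 (ZMod n))).ncard :=
        (Set.ncard_coe_finset _).symm
    _ ≤ mixedCount (cyclePow n d) f := Set.ncard_le_ncard hsub (Set.toFinite _)


lemma key (d : ℕ) (hd : 2 ≤ d) (hn : 2*d+1 ≤ n)
    (χ : ZMod n → Fin 2) (hnc : ¬ ∀ x, χ x = χ 0) :
    2 * d ≤ ∑ j ∈ Finset.Icc 1 d, (chg χ (j : ZMod n)).card := by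
  classical
  have npos : 0 < n := Nat.pos_of_ne_zero (NeZero.ne n)
  set P : ℕ → Prop := fun j => ∀ x, χ (x + (j : ZMod n)) = χ x with hP
  have hex : ∃ j, 0 < j ∧ P j := ⟨n, npos, fun x => by simp⟩
  set g := Nat.find hex with hgdef
  obtain ⟨hgpos, hPg⟩ := Nat.find_spec hex
  rw [← hgdef] at hgpos hPg
  have hgmin : ∀ k, k < g → ¬ (0 < k ∧ P k) := fun k hk => Nat.find_min hex hk
  have Padd : ∀ a b, P a → P b → P (a + b) := by
    intro a b ha hb x
    have : χ (x + (a:ZMod n) + (b:ZMod n)) = χ x := by rw [hb, ha]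
    rwa [Nat.cast_add, ← add_assoc]
  have Pmul : ∀ k, P (g * k) := by
    intro k
    induction k with
    | zero => intro x; simp
    | succ k ih =>
        have := Padd _ _ ih hPg
        rwa [← Nat.mul_succ] at this
  have Pdvd : ∀ j, P j → g ∣ j := by
    intro j hj
    have hmod : P (j % g) := by
      intro x
      have h1 : χ (x + ((j % g : ℕ) : ZMod n) + ((g * (j / g) : ℕ) : ZMod n))
          = χ (x + ((j % g : ℕ) : ZMod n)) := Pmul (j / g) _
      rw [add_assoc, ← Nat.cast_add, Nat.mod_add_div] at h1
      rw [← h1, hj]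
    rcases Nat.eq_zero_or_pos (j % g) with h0 | hpos
    · exact Nat.dvd_of_mod_eq_zero h0
    · exact absurd ⟨hpos, hmod⟩ (hgmin _ (Nat.mod_lt _ hgpos))
  have hgn : g ∣ n := Pdvd n (fun x => by simp)
  have hg2 : 2 ≤ g := by
    by_contra hlt
    push_neg at hlt
    have hg1 : g = 1 := by omega
    apply hnc
    intro x
    have hk : P x.val := by
      have := Pmul x.val
      rwa [hg1, one_mul] at this
    have := hk 0
    rwa [zero_add, ZMod.natCast_rightInverse x] at this
  set m := n / g with hmdef
  have hmg : m * g = n := Nat.div_mul_cancel hgn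
  have hm1 : 1 ≤ m := by
    rcases Nat.eq_zero_or_pos m with h | h
    · rw [h, zero_mul] at hmg; omega
    · exact h
  -- per-j bound
  have perj : ∀ j ∈ Finset.Icc 1 d, ¬ g ∣ j → 2 * m ≤ (chg χ (j : ZMod n)).card := by
    intro j hj hndvd
    have hnPj : ¬ P j := fun h => hndvd (Pdvd j h)
    have hchg_ne : (chg χ (j:ZMod n)).Nonempty := by
      obtain ⟨x, hx⟩ := not_forall.mp
        (show ¬ ∀ x : ZMod n, χ (x + (j:ZMod n)) = χ x from hnPj)
      refine ⟨x, ?_⟩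
      simp only [chg, mem_filter, mem_univ, true_and]
      exact fun h => hx h.symm
    have hU0_ne : (U0 χ (j:ZMod n)).Nonempty := by
      rw [← Finset.card_pos]
      have := chg_card_two_mul χ (j : ZMod n)
      have h1 : 0 < (chg χ (j:ZMod n)).card := Finset.card_pos.mpr hchg_ne
      omega
    have := card_ge_orbit (S := U0 χ (j:ZMod n)) (c := (g : ZMod n)) m
      (by
        intro x hx
        simp only [U0, mem_filter, mem_univ, true_and] at hx ⊢
        refine ⟨(hPg x).trans hx.1, ?_⟩
        have : x + (g:ZMod n) + (j:ZMod n) = x + (j:ZMod n) + (g:ZMod n) := by ring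
        rw [this, hPg]
        exact hx.2)
      (by
        intro k hk1 hk2 hkc
        have : ((k * g : ℕ) : ZMod n) = 0 := by
          rw [Nat.cast_mul, ← nsmul_eq_mul]; exact hkc
        rw [ZMod.natCast_eq_zero_iff] at this
        have hlt : k * g < n := by
          calc k * g < m * g := by exact Nat.mul_lt_mul_of_lt_of_le hk2 (le_refl g) hgpos
          _ = n := hmg
        have := Nat.le_of_dvd (by positivity) this
        omega)
      hU0_ne
    rw [chg_card_two_mul]
    omega
  -- counting
  set F := (Finset.Icc 1 d).filter (fun j => ¬ g ∣ j) with hF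
  have hFcard : F.card = d - d / g := by
    have h1 : ((Finset.Icc 1 d).filter (fun j => g ∣ j)).card = d / g := by
      rw [show Finset.Icc 1 d = Finset.Ioc 0 d from by rw [← Finset.Icc_add_one_left_eq_Ioc, zero_add]]
      exact Nat.Ioc_filter_dvd_card_eq_div d g
    have h2 : ((Finset.Icc 1 d).filter (fun j => g ∣ j)).card + F.card = d := by
      rw [hF]
      have h3 := Finset.card_filter_add_card_filter_not
        (s := Finset.Icc 1 d) (p := fun j => g ∣ j)
      simp only [Nat.card_Icc, Nat.add_sub_cancel] at h3
      simpa using h3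
    omega
  have hsum : F.card * (2 * m) ≤ ∑ j ∈ Finset.Icc 1 d, (chg χ (j : ZMod n)).card := by
    calc F.card * (2 * m) = F.card • (2 * m) := by simp
    _ ≤ ∑ j ∈ F, (chg χ (j : ZMod n)).card := by
        apply Finset.card_nsmul_le_sum
        intro j hj
        rw [hF, Finset.mem_filter] at hj
        exact perj j hj.1 hj.2
    _ ≤ _ := Finset.sum_le_sum_of_subset (Finset.filter_subset _ _)
  -- arithmetic
  refine le_trans ?_ hsum
  rw [hFcard]
  set q := d / g with hq
  have hqg : q * g ≤ d := Nat.div_mul_le_self d g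
  have hqd : q ≤ d := le_trans (Nat.le_mul_of_pos_right q hgpos) hqg
  rcases Nat.eq_zero_or_pos q with h0 | hq1
  · rw [h0]; simp; nlinarith
  · have h2q : 2 * q ≤ d := by nlinarith
    have hm2 : 2 * q + 1 ≤ m := by nlinarith
    obtain ⟨e, he⟩ : ∃ e, d = e + q := ⟨d - q, by omega⟩
    rw [he]
    have : e + q - q = e := by omega
    rw [this]
    nlinarith

lemma balanced_exists (hn5 : 5 ≤ n) : ∃ f : ZMod n → Fin 2, BalancedColoring f := by
  classical
  refine ⟨fun v => if v.val < (n+1)/2 then 0 else 1, ?_⟩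
  have h0 : Nat.card {v : ZMod n | (if v.val < (n+1)/2 then (0:Fin 2) else 1) = 0}
      = (n+1)/2 := by
    rw [natcard_setOf]
    rw [show (univ.filter fun v : ZMod n => (if v.val < (n+1)/2 then (0:Fin 2) else 1) = 0)
        = univ.filter (fun v : ZMod n => v.val < (n+1)/2) from by
      apply Finset.filter_congr; intro v _
      by_cases h : v.val < (n+1)/2 <;> simp [h]]
    exact card_val_lt _ (by omega)
  have h1 : Nat.card {v : ZMod n | (if v.val < (n+1)/2 then (0:Fin 2) else 1) = 1}
      = n - (n+1)/2 := by
    rw [natcard_setOf]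
    rw [show (univ.filter fun v : ZMod n => (if v.val < (n+1)/2 then (0:Fin 2) else 1) = 1)
        = univ.filter (fun v : ZMod n => ¬ v.val < (n+1)/2) from by
      apply Finset.filter_congr; intro v _
      by_cases h : v.val < (n+1)/2 <;> simp [h]]
    have h2 := Finset.card_filter_add_card_filter_not
      (s := (univ : Finset (ZMod n))) (p := fun v : ZMod n => v.val < (n+1)/2)
    rw [card_val_lt _ (by omega)] at h2
    rw [Finset.card_univ, ZMod.card] at h2
    omega
  constructor <;> rw [h0, h1] <;> omega

lemma balanced_nonconst (hn2 : 2 ≤ n) (f : ZMod n → Fin 2) (hbal : BalancedColoring f) :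
    ¬ ∀ x, f x = f 0 := by
  classical
  intro hall
  rcases fin2_cases (f 0) with h | h
  · have e0 : Nat.card {v : ZMod n | f v = 0} = n := by
      rw [natcard_setOf,
        show (univ.filter fun v : ZMod n => f v = 0) = univ from by ext v; simp [hall v, h]]
      simp [Finset.card_univ, ZMod.card]
    have e1 : Nat.card {v : ZMod n | f v = 1} = 0 := by
      rw [natcard_setOf,
        show (univ.filter fun v : ZMod n => f v = 1) = ∅ from by ext v; simp [hall v, h]]
      simp
    have := hbal.1
    rw [e0, e1] at this
    omega
  · have e1 : Nat.card {v : ZMod n | f v = 1} = n := by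
      rw [natcard_setOf,
        show (univ.filter fun v : ZMod n => f v = 1) = univ from by ext v; simp [hall v, h]]
      simp [Finset.card_univ, ZMod.card]
    have e0 : Nat.card {v : ZMod n | f v = 0} = 0 := by
      rw [natcard_setOf,
        show (univ.filter fun v : ZMod n => f v = 0) = ∅ from by ext v; simp [hall v, h]]
      simp
    have := hbal.2
    rw [e0, e1] at this
    omega

end Main

theorem stmt12 (d n : ℕ) (hd : 2 ≤ d) (hn : 2 * d + 1 ≤ n) :
    2 * d ≤ rna (cyclePow n d) := by
  haveI : NeZero n := ⟨by omega⟩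
  apply le_csInf
  · obtain ⟨f, hf⟩ := balanced_exists (n := n) (by omega)
    exact ⟨mixedCount (cyclePow n d) f, f, hf, rfl⟩
  · rintro k ⟨f, hbal, rfl⟩
    have hnc := balanced_nonconst (n := n) (by omega) f hbal
    exact le_trans (key d hd hn f hnc) (count_lower d hd hn f)
end
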